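/- Discrete calibration result: let w ∈ [0,1]^N with ‖w‖₁ > 0, SD(x) = 1 − 2⟨x,w⟩/(‖x‖₁+‖w‖₁) on [0,1]^N, D(y) = 2⟨y,w⟩/(‖y‖₁+‖w‖₁) on {0,1}^N, and fix a threshold a ∈ (0,1). Suppose additionally that wᵢ ≠ D*/2 for all i, where D* = max_y D(y). If (x^(l))_{l≥1} ⊂ [0,1]^N is a sequence with SD(x^(l)) → min_x SD(x), then for all sufficiently large l, the thresholded vector T_a(x^(l)) (with i-th entry 1 if x^(l)ᵢ ≥ a, else 0) satisfies D(T_a(x^(l))) = D* = max_y D(y). -/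
import Mathlib


open Filter

noncomputable section

/-- Discrete soft-Dice loss `SD(x) = 1 - 2⟨x,w⟩/(‖x‖₁ + ‖w‖₁)`. -/
def SDd {N : ℕ} (w x : Fin N → ℝ) : ℝ :=
  1 - 2 * (∑ i, x i * w i) / ((∑ i, x i) + (∑ i, w i))

/-- Discrete Dice score `D(y) = 2⟨y,w⟩/(‖y‖₁ + ‖w‖₁)`. -/
def Dd {N : ℕ} (w y : Fin N → ℝ) : ℝ :=
  2 * (∑ i, y i * w i) / ((∑ i, y i) + (∑ i, w i))

/-- The set of soft-Dice values over `[0,1]^N`. -/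
def SDdvals {N : ℕ} (w : Fin N → ℝ) : Set ℝ :=
  {v : ℝ | ∃ x : Fin N → ℝ, (∀ i, x i ∈ Set.Icc (0:ℝ) 1) ∧ v = SDd w x}

/-- The set of Dice values over `{0,1}^N`. -/
def Ddvals {N : ℕ} (w : Fin N → ℝ) : Set ℝ :=
  {v : ℝ | ∃ y : Fin N → ℝ, (∀ i, y i = 0 ∨ y i = 1) ∧ v = Dd w y}

theorem discrete_calibration
    {N : ℕ} (hN : 1 ≤ N) (w : Fin N → ℝ)
    (hw : ∀ i, w i ∈ Set.Icc (0:ℝ) 1) (hpos : 0 < ∑ i, w i)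
    (Dstar : ℝ) (hD : Dstar = sSup (Ddvals w))
    (hne : ∀ i, w i ≠ Dstar / 2)
    (a : ℝ) (ha : a ∈ Set.Ioo (0:ℝ) 1)
    (x : ℕ → Fin N → ℝ) (hx : ∀ l i, x l i ∈ Set.Icc (0:ℝ) 1)
    (hconv : Tendsto (fun l => SDd w (x l)) atTop (nhds (sInf (SDdvals w)))) :
    ∀ᶠ l in atTop,
      Dd w (fun i => if a ≤ x l i then (1:ℝ) else 0) = Dstar := by
  classical
  have hNfin : Nonempty (Fin N) := ⟨⟨0, hN⟩⟩
  -- sum identity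
  have hsum : ∀ y : Fin N → ℝ,
      ∑ i, y i * (2 * w i - Dstar) = 2 * (∑ i, y i * w i) - Dstar * ∑ i, y i := by
    intro y
    rw [Finset.mul_sum, Finset.mul_sum, ← Finset.sum_sub_distrib]
    exact Finset.sum_congr rfl (fun i _ => by ring)
  have hne' : ∀ i, 2 * w i ≠ Dstar := by
    intro i h
    exact hne i (by linarith)
  -- finiteness of Ddvals
  have hfin : (Ddvals w).Finite := by
    have hsub : Ddvals w ⊆
        (fun b : Fin N → Bool => Dd w (fun i => if b i then (1:ℝ) else 0)) '' Set.univ := by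
      rintro v ⟨y, hy, rfl⟩
      refine ⟨fun i => y i = 1, trivial, ?_⟩
      simp only []
      congr 1
      funext i
      rcases hy i with h | h <;> simp [h]
    exact Set.Finite.subset (Set.finite_univ.image _) hsub
  have hnonempty : (Ddvals w).Nonempty :=
    ⟨Dd w (fun _ => 0), fun _ => 0, fun _ => Or.inl rfl, rfl⟩
  have hDmem : Dstar ∈ Ddvals w := hD ▸ hnonempty.csSup_mem hfin
  have hub : ∀ y : Fin N → ℝ, (∀ i, y i = 0 ∨ y i = 1) → Dd w y ≤ Dstar := by
    intro y hy
    rw [hD]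
    exact le_csSup hfin.bddAbove ⟨y, hy, rfl⟩
  -- denominator positivity
  have hden : ∀ y : Fin N → ℝ, (∀ i, 0 ≤ y i) → 0 < (∑ i, y i) + (∑ i, w i) := by
    intro y hy
    have : 0 ≤ ∑ i, y i := Finset.sum_nonneg (fun i _ => hy i)
    linarith
  -- the optimal binary vector
  set ystar : Fin N → ℝ := fun i => if Dstar < 2 * w i then 1 else 0 with hystar
  have hystar01 : ∀ i, ystar i = 0 ∨ ystar i = 1 := by
    intro i; by_cases h : Dstar < 2 * w i <;> simp [hystar, h]
  have hystarnn : ∀ i, 0 ≤ ystar i := by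
    intro i; rcases hystar01 i with h | h <;> rw [h] <;> norm_num
  have hystarden := hden ystar hystarnn
  -- obtain a maximizer m
  obtain ⟨m, hm01, hmD⟩ := hDmem
  have hmnn : ∀ i, 0 ≤ m i := by
    intro i; rcases hm01 i with h | h <;> rw [h] <;> norm_num
  have hmden := hden m hmnn
  have hmD' : Dstar * ((∑ i, m i) + (∑ i, w i)) = 2 * (∑ i, m i * w i) := by
    rw [Dd, eq_div_iff (ne_of_gt hmden)] at hmD
    linarith [hmD]
  have hmg : ∑ i, m i * (2 * w i - Dstar) = Dstar * (∑ i, w i) := by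
    rw [hsum m]; linear_combination -hmD'
  -- g ystar ≥ g m pointwise
  have hge : ∑ i, m i * (2 * w i - Dstar) ≤ ∑ i, ystar i * (2 * w i - Dstar) := by
    apply Finset.sum_le_sum
    intro i _
    by_cases h : Dstar < 2 * w i
    · have h1 : ystar i = 1 := by simp [hystar, h]
      have hm1 : m i ≤ 1 := by rcases hm01 i with hh | hh <;> rw [hh] <;> norm_num
      rw [h1, one_mul]
      nlinarith [hmnn i]
    · have h0 : ystar i = 0 := by simp [hystar, h]
      have hlt : 2 * w i < Dstar := lt_of_le_of_ne (not_lt.mp h) (hne' i)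
      rw [h0, zero_mul]
      nlinarith [hmnn i]
  have hkeyle : ∑ i, ystar i * (2 * w i - Dstar) ≤ Dstar * (∑ i, w i) := by
    have h2 := hub ystar hystar01
    rw [Dd, div_le_iff₀ hystarden] at h2
    rw [hsum ystar]
    nlinarith [h2]
  have hgystar : ∑ i, ystar i * (2 * w i - Dstar) = Dstar * (∑ i, w i) :=
    le_antisymm hkeyle (hmg ▸ hge)
  have hDystar : Dd w ystar = Dstar := by
    rw [Dd, div_eq_iff (ne_of_gt hystarden)]
    have h1 := hsum ystar
    rw [hgystar] at h1
    linear_combination -h1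
  -- deficiency identity
  have hdefic : ∀ x0 : Fin N → ℝ,
      Dstar * ((∑ i, x0 i) + (∑ i, w i)) - 2 * (∑ i, x0 i * w i)
        = ∑ i, (ystar i - x0 i) * (2 * w i - Dstar) := by
    intro x0
    have h1 : ∑ i, (ystar i - x0 i) * (2 * w i - Dstar)
        = (∑ i, ystar i * (2 * w i - Dstar)) - ∑ i, x0 i * (2 * w i - Dstar) := by
      rw [← Finset.sum_sub_distrib]
      exact Finset.sum_congr rfl (fun i _ => by ring)
    rw [h1, hgystar, hsum x0]
    ring
  have htermnn : ∀ x0 : Fin N → ℝ, (∀ i, x0 i ∈ Set.Icc (0:ℝ) 1) →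
      ∀ i, 0 ≤ (ystar i - x0 i) * (2 * w i - Dstar) := by
    intro x0 hx0 i
    obtain ⟨h0, h1⟩ := hx0 i
    by_cases h : Dstar < 2 * w i
    · have he : ystar i = 1 := by simp [hystar, h]
      rw [he]; nlinarith
    · have he : ystar i = 0 := by simp [hystar, h]
      have hlt : 2 * w i < Dstar := lt_of_le_of_ne (not_lt.mp h) (hne' i)
      rw [he]; nlinarith
  -- lower bound for SDd on the cube
  have hflb : ∀ x0 : Fin N → ℝ, (∀ i, x0 i ∈ Set.Icc (0:ℝ) 1) →
      1 - Dstar ≤ SDd w x0 := by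
    intro x0 hx0
    have hd := hden x0 (fun i => (hx0 i).1)
    have hnn : 0 ≤ ∑ i, (ystar i - x0 i) * (2 * w i - Dstar) :=
      Finset.sum_nonneg (fun i _ => htermnn x0 hx0 i)
    have h2 : 2 * (∑ i, x0 i * w i) / ((∑ i, x0 i) + (∑ i, w i)) ≤ Dstar := by
      rw [div_le_iff₀ hd]
      nlinarith [hdefic x0]
    rw [SDd]
    linarith
  -- infimum of SDdvals
  have hystarIcc : ∀ i, ystar i ∈ Set.Icc (0:ℝ) 1 := by
    intro i; rcases hystar01 i with h | h <;> rw [h] <;> constructor <;> norm_num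
  have hSDystar : SDd w ystar = 1 - Dstar := by
    rw [SDd, ← hDystar, Dd]
  have hInf : sInf (SDdvals w) = 1 - Dstar := by
    apply IsLeast.csInf_eq
    constructor
    · exact ⟨ystar, hystarIcc, hSDystar.symm⟩
    · rintro v ⟨x0, hx0, rfl⟩
      exact hflb x0 hx0
  -- quantitative constants
  set δ : ℝ := Finset.univ.inf' (Finset.univ_nonempty) (fun i => |2 * w i - Dstar|) with hδdef
  have hδpos : 0 < δ := by
    rw [hδdef, Finset.lt_inf'_iff]
    intro i _
    exact abs_pos.mpr (sub_ne_zero.mpr (hne' i))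
  have hδle : ∀ i, δ ≤ |2 * w i - Dstar| := by
    intro i
    exact Finset.inf'_le _ (Finset.mem_univ i)
  obtain ⟨ha0, ha1⟩ := ha
  set c : ℝ := min a (1 - a) with hcdef
  have hcpos : 0 < c := lt_min ha0 (by linarith)
  have hca : c ≤ a := min_le_left _ _
  have hc1a : c ≤ 1 - a := min_le_right _ _
  have hNW : (0:ℝ) < (N:ℝ) + (∑ i, w i) := by positivity
  set ε : ℝ := c * δ / ((N:ℝ) + (∑ i, w i)) with hεdef
  have hεpos : 0 < ε := by positivity
  -- main quantitative lemma
  have hmain : ∀ x0 : Fin N → ℝ, (∀ i, x0 i ∈ Set.Icc (0:ℝ) 1) →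
      SDd w x0 < 1 - Dstar + ε →
      (fun i => if a ≤ x0 i then (1:ℝ) else 0) = ystar := by
    intro x0 hx0 hsd
    by_contra hneq
    obtain ⟨i, hi⟩ := Function.ne_iff.mp hneq
    -- the i-th deficiency term is at least c * δ
    have hterm : c * δ ≤ (ystar i - x0 i) * (2 * w i - Dstar) := by
      obtain ⟨h0, h1⟩ := hx0 i
      by_cases h : Dstar < 2 * w i
      · have he : ystar i = 1 := by simp [hystar, h]
        have hxa : x0 i < a := by
          by_contra hge
          exact hi (by simp [he, not_lt.mp hge])
        have habs : δ ≤ 2 * w i - Dstar := by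
          have hh := hδle i
          rwa [abs_of_pos (by linarith)] at hh
        have h1a : c ≤ 1 - x0 i := by linarith
        rw [he, show ((1:ℝ) - x0 i) * (2 * w i - Dstar) = (1 - x0 i) * (2 * w i - Dstar) from rfl]
        exact mul_le_mul h1a habs hδpos.le (by linarith)
      · have he : ystar i = 0 := by simp [hystar, h]
        have hlt : 2 * w i < Dstar := lt_of_le_of_ne (not_lt.mp h) (hne' i)
        have hxa : a ≤ x0 i := by
          by_contra hge
          exact hi (by simp [he, hge])
        have habs : δ ≤ Dstar - 2 * w i := by
          have hh := hδle i
          rw [abs_of_neg (by linarith : 2 * w i - Dstar < 0)] at hh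
          linarith
        have hcx : c ≤ x0 i := le_trans hca hxa
        rw [he, show ((0:ℝ) - x0 i) * (2 * w i - Dstar) = x0 i * (Dstar - 2 * w i) by ring]
        exact mul_le_mul hcx habs hδpos.le (by linarith)
    -- total deficiency is at least c * δ
    have hsum_lb : c * δ ≤ ∑ i, (ystar i - x0 i) * (2 * w i - Dstar) := by
      calc c * δ ≤ (ystar i - x0 i) * (2 * w i - Dstar) := hterm
        _ ≤ ∑ j, (ystar j - x0 j) * (2 * w j - Dstar) :=
          Finset.single_le_sum (fun j _ => htermnn x0 hx0 j) (Finset.mem_univ i)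
    have hd := hden x0 (fun i => (hx0 i).1)
    have hdle : (∑ i, x0 i) + (∑ i, w i) ≤ (N:ℝ) + (∑ i, w i) := by
      have : (∑ i, x0 i) ≤ (N:ℝ) := by
        calc (∑ i, x0 i) ≤ ∑ _i : Fin N, (1:ℝ) :=
            Finset.sum_le_sum (fun i _ => (hx0 i).2)
          _ = (N:ℝ) := by simp
      linarith
    -- contradiction with hsd
    have hεd : ε * ((∑ i, x0 i) + (∑ i, w i)) ≤ c * δ := by
      have ha1' : ε * ((∑ i, x0 i) + (∑ i, w i)) ≤ ε * ((N:ℝ) + (∑ i, w i)) :=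
        mul_le_mul_of_nonneg_left hdle hεpos.le
      have ha2' : ε * ((N:ℝ) + (∑ i, w i)) = c * δ := by
        rw [hεdef]; field_simp
      linarith
    have h2 : 2 * (∑ i, x0 i * w i) / ((∑ i, x0 i) + (∑ i, w i)) ≤ Dstar - ε := by
      rw [div_le_iff₀ hd]
      have h3 := hdefic x0
      nlinarith [hsum_lb]
    rw [SDd] at hsd
    linarith
  -- conclusion
  rw [hInf] at hconv
  have hev : ∀ᶠ l in atTop, SDd w (x l) < 1 - Dstar + ε :=
    hconv.eventually_lt_const (by linarith)
  filter_upwards [hev] with l hl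
  rw [hmain (x l) (hx l) hl, hDystar]
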